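/- Let h be the counterexample function of the second formulation (with parameter ε ∈ (0,1]), and define S(x) = ∫₀ˣ 4h(t²)/t dt. Then for 0 ≤ x < x₁ = (3/5)^{1/8}, S(x) = 6x⁴(1 − ε V(x/x₁)) where V(θ) = (7θ² − 3)(θ² − 1)³/3, and S(x) = 6x⁴ for x ≥ x₁. -/

import Mathlib

noncomputable def U (τ : ℝ) : ℝ := (7 * τ^2 - 8 * τ + 2) * τ^2

noncomputable def V (θ : ℝ) : ℝ := (7 * θ^2 - 3) * (θ^2 - 1)^3 / 3

noncomputable def x₀ : ℝ := (3/5 : ℝ) ^ ((1:ℝ)/4)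

noncomputable def x₁ : ℝ := (3/5 : ℝ) ^ ((1:ℝ)/8)

noncomputable def h (ε x : ℝ) : ℝ :=
  if x < x₀ then 6 * x^2 * (1 - ε * U ((x₀ - x) / x₀)) else 6 * x^2

noncomputable def S (ε x : ℝ) : ℝ := ∫ t in (0:ℝ)..x, 4 * h ε (t^2) / t

noncomputable def PP (ε x : ℝ) : ℝ :=
  6 * x^4 - 2 * ε * ((7 * (x/x₁)^2 - 3) * ((x/x₁)^2 - 1)^3 * x^4)

noncomputable def Phi (ε x : ℝ) : ℝ := if x < x₁ then PP ε x else 6 * x^4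

noncomputable def gg (ε x : ℝ) : ℝ :=
  if x < x₁ then 24 * x^3 * (1 - ε * U (1 - (x/x₁)^2)) else 24 * x^3

lemma hx1_pos : (0:ℝ) < x₁ := Real.rpow_pos_of_pos (by norm_num) _

lemma hx1_sq : x₁ ^ 2 = x₀ := by
  rw [x₁, x₀, ← Real.rpow_natCast ((3/5:ℝ) ^ ((1:ℝ)/8)) 2,
    ← Real.rpow_mul (by norm_num)]
  norm_num

lemma hasDerivAt_PP (ε x : ℝ) :
    HasDerivAt (PP ε) (24 * x^3 * (1 - ε * U (1 - (x/x₁)^2))) x := by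
  have hc : (x₁ : ℝ) ≠ 0 := hx1_pos.ne'
  have hq : HasDerivAt (fun y : ℝ => (y/x₁)^2) (2 * (x/x₁) * (1/x₁)) x := by
    simpa using ((hasDerivAt_id x).div_const x₁).fun_pow 2
  have h2 : HasDerivAt (fun y : ℝ => 7 * (y/x₁)^2 - 3) (7 * (2 * (x/x₁) * (1/x₁))) x :=
    (hq.const_mul 7).sub_const 3
  have h3 : HasDerivAt (fun y : ℝ => ((y/x₁)^2 - 1)^3)
      (3 * ((x/x₁)^2 - 1)^2 * (2 * (x/x₁) * (1/x₁))) x := by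
    simpa using (hq.sub_const 1).fun_pow 3
  have h4 : HasDerivAt (fun y : ℝ => y^4) (4 * x^3) x := by
    simpa using hasDerivAt_pow 4 x
  have h5 := ((h2.mul h3).mul h4).const_mul (2*ε)
  have h6 := (h4.const_mul 6).sub h5
  have heq : 24 * x^3 * (1 - ε * U (1 - (x/x₁)^2)) =
      6 * (4 * x^3) - 2 * ε *
        ((7 * (2 * (x/x₁) * (1/x₁)) * ((x/x₁)^2 - 1)^3 +
          (7 * (x/x₁)^2 - 3) * (3 * ((x/x₁)^2 - 1)^2 * (2 * (x/x₁) * (1/x₁)))) * x^4 +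
          (7 * (x/x₁)^2 - 3) * ((x/x₁)^2 - 1)^3 * (4 * x^3)) := by
    unfold U
    field_simp
    ring
  rw [heq]
  exact h6

lemma PP_at_x1 (ε : ℝ) : PP ε x₁ = 6 * x₁^4 := by
  unfold PP
  rw [div_self hx1_pos.ne']
  ring

lemma hasDerivAt_Phi (ε t : ℝ) : HasDerivAt (Phi ε) (gg ε t) t := by
  have hc : (x₁ : ℝ) ≠ 0 := hx1_pos.ne'
  rcases lt_trichotomy t x₁ with ht | ht | ht
  · have hev : Phi ε =ᶠ[nhds t] PP ε := by
      filter_upwards [Iio_mem_nhds ht] with y hy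
      simp [Phi, show y < x₁ from hy]
    have := (hasDerivAt_PP ε t).congr_of_eventuallyEq hev
    simpa [gg, if_pos ht] using this
  · subst ht
    have hl : HasDerivWithinAt (Phi ε) (24 * x₁^3) (Set.Iic x₁) x₁ := by
      have h1 : HasDerivAt (PP ε) (24 * x₁^3) x₁ := by
        have := hasDerivAt_PP ε x₁
        rw [div_self hc] at this
        simpa [U] using this
      refine (h1.hasDerivWithinAt).congr ?_ ?_
      · intro y hy
        rcases lt_or_eq_of_le (Set.mem_Iic.mp hy) with hy' | hy'
        · simp [Phi, hy']
        · subst hy'; simp [Phi, PP_at_x1]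
      · simp [Phi, PP_at_x1]
    have hr : HasDerivWithinAt (Phi ε) (24 * x₁^3) (Set.Ici x₁) x₁ := by
      have h1 : HasDerivAt (fun y : ℝ => 6 * y^4) (24 * x₁^3) x₁ := by
        have := (hasDerivAt_pow 4 x₁).const_mul (6:ℝ)
        norm_num at this
        convert this using 1
        all_goals first | rfl | ring
      refine (h1.hasDerivWithinAt).congr ?_ ?_
      · intro y hy
        simp [Phi, show ¬ y < x₁ from not_lt.mpr (hy : x₁ ≤ y)]
      · simp [Phi]
    have := hl.union hr
    rw [Set.Iic_union_Ici] at this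
    have h2 := this.hasDerivAt (by simp)
    simpa [gg] using h2
  · have hev : Phi ε =ᶠ[nhds t] (fun y : ℝ => 6 * y^4) := by
      filter_upwards [Ioi_mem_nhds ht] with y hy
      simp [Phi, show ¬ y < x₁ from not_lt.mpr (le_of_lt (hy : x₁ < y))]
    have h1 : HasDerivAt (fun y : ℝ => 6 * y^4) (24 * t^3) t := by
      have := (hasDerivAt_pow 4 t).const_mul (6:ℝ)
      norm_num at this
      convert this using 1
      all_goals first | rfl | ring
    have := h1.congr_of_eventuallyEq hev
    simpa [gg, if_neg (not_lt.mpr (le_of_lt ht))] using this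

lemma continuous_gg (ε : ℝ) : Continuous (gg ε) := by
  have hfun : gg ε = fun x => if x ≤ x₁ then 24 * x^3 * (1 - ε * U (1 - (x/x₁)^2))
      else 24 * x^3 := by
    funext x
    rcases lt_trichotomy x x₁ with hx | hx | hx
    · simp [gg, if_pos hx, if_pos hx.le]
    · subst hx
      simp [gg, div_self hx1_pos.ne', U]
    · simp [gg, if_neg (not_lt.mpr hx.le), if_neg (not_le.mpr hx)]
  rw [hfun]
  apply Continuous.if_le
  · unfold U; fun_prop
  · fun_prop
  · exact continuous_id
  · exact continuous_const
  · intro x hx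
    subst hx
    rw [div_self hx1_pos.ne']
    simp [U]

lemma S_eq_Phi (ε x : ℝ) (hx : 0 ≤ x) : S ε x = Phi ε x := by
  have hc : (0:ℝ) < x₁ := hx1_pos
  have hfg : Set.EqOn (fun t => 4 * h ε (t^2) / t) (gg ε) (Set.uIcc 0 x) := by
    intro t ht
    rw [Set.uIcc_of_le hx] at ht
    rcases eq_or_lt_of_le ht.1 with rfl | ht0
    · show 4 * h ε (0^2) / 0 = gg ε 0
      rw [div_zero]
      unfold gg
      split <;> ring
    · show 4 * h ε (t^2) / t = gg ε t
      have hiff : t^2 < x₀ ↔ t < x₁ := by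
        rw [← hx1_sq]
        constructor
        · intro hlt
          exact lt_of_pow_lt_pow_left₀ 2 hc.le hlt
        · intro hlt
          exact pow_lt_pow_left₀ hlt ht0.le (by norm_num)
      have harg : (x₀ - t^2) / x₀ = 1 - (t/x₁)^2 := by
        rw [← hx1_sq]
        field_simp
      by_cases htc : t < x₁
      · rw [gg, if_pos htc, h, if_pos (hiff.mpr htc), harg]
        field_simp
        ring
      · rw [gg, if_neg htc, h, if_neg (by rw [hiff]; exact htc)]
        field_simp
        ring
  have hPhi0 : Phi ε 0 = 0 := by
    simp [Phi, if_pos hc, PP]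
  rw [S, intervalIntegral.integral_congr hfg,
    intervalIntegral.integral_eq_sub_of_hasDerivAt
      (fun t _ => hasDerivAt_Phi ε t) ((continuous_gg ε).intervalIntegrable 0 x),
    hPhi0, sub_zero]

theorem S_formula (ε : ℝ) (hε0 : 0 < ε) (hε1 : ε ≤ 1) :
    (∀ x : ℝ, 0 ≤ x → x < x₁ → S ε x = 6 * x^4 * (1 - ε * V (x / x₁))) ∧
    (∀ x : ℝ, x₁ ≤ x → S ε x = 6 * x^4) := by
  constructor
  · intro x hx0 hx1
    rw [S_eq_Phi ε x hx0, Phi, if_pos hx1, PP, V]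
    ring
  · intro x hx1
    rw [S_eq_Phi ε x (le_trans hx1_pos.le hx1), Phi, if_neg (not_lt.mpr hx1)]
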